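/- Let s₁, s₂ ∈ ℝ^{4,2} be lightlike with ⟨s₁,p⟩ = ⟨s₂,p⟩ = 1 and ⟨s₁,s₂⟩ = −1, and let m, n be lightlike vectors orthogonal to s₁, s₂ and p with ⟨m,n⟩ ≠ 0 (two distinct points of the circle in which s₁ and s₂ intersect). Then the subspace W := {t ∈ ℝ^{4,2} : ⟨t, s₁+p⟩ = ⟨t, s₂+p⟩ = ⟨t,m⟩ = ⟨t,n⟩ = 0} is 2-dimensional, the form restricted to W has signature (1,1), and hence W contains a nonzero lightlike vector. (Fact: for any two points m, n of a circle, the contact elements of orthogonally intersecting spheres at m and at n share a common sphere, possibly after reversing orientation.) -/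

import Mathlib

noncomputable section

/-- The vector space ℝ^{4,2}, modeled as `Fin 6 → ℝ`. -/
abbrev R42 : Type := Fin 6 → ℝ

/-- The symmetric bilinear form of signature (4,2) on ℝ^{4,2}. -/
def bform : R42 →ₗ[ℝ] R42 →ₗ[ℝ] ℝ :=
  LinearMap.mk₂ ℝ
    (fun x y => x 0 * y 0 + x 1 * y 1 + x 2 * y 2 + x 3 * y 3 - x 4 * y 4 - x 5 * y 5)
    (fun x x' y => by simp only [Pi.add_apply]; ring)
    (fun c x y => by simp only [Pi.smul_apply, smul_eq_mul]; ring)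
    (fun x y y' => by simp only [Pi.add_apply]; ring)
    (fun c x y => by simp only [Pi.smul_apply, smul_eq_mul]; ring)

/-- A lightlike vector: nonzero and isotropic. Represents an oriented 2-sphere. -/
def IsLightlike (v : R42) : Prop := v ≠ 0 ∧ bform v v = 0

/-- The Lie inversion with respect to the linear sphere complex determined by `a`. -/
def lieInv (a r : R42) : R42 := r - (2 * bform r a / bform a a) • a

lemma bform_apply (x y : R42) :
    bform x y = x 0 * y 0 + x 1 * y 1 + x 2 * y 2 + x 3 * y 3 - x 4 * y 4 - x 5 * y 5 := rfl

lemma bform_comm (x y : R42) : bform x y = bform y x := by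
  simp only [bform_apply]; ring

lemma aux_sq {y : ℝ} (h : y ^ 2 ≤ 0) : y = 0 :=
  pow_eq_zero_iff two_ne_zero |>.mp (le_antisymm h (sq_nonneg y))

set_option maxHeartbeats 2000000 in
/-- For two points `m`, `n` of the circle in which the orthogonally
intersecting spheres `s₁`, `s₂` meet, the subspace
`W = {t : ⟨t,s₁+p⟩ = ⟨t,s₂+p⟩ = ⟨t,m⟩ = ⟨t,n⟩ = 0}` is 2-dimensional of signature
(1,1); hence it contains a nonzero lightlike vector: the contact elements of
orthogonal spheres at `m` and at `n` share a common sphere. -/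
theorem stmt_2 (p s₁ s₂ m n : R42)
    (hp : bform p p = -1)
    (hs₁ : IsLightlike s₁) (hs₂ : IsLightlike s₂)
    (hm : IsLightlike m) (hn : IsLightlike n)
    (hs₁p : bform s₁ p = 1) (hs₂p : bform s₂ p = 1) (hs₁s₂ : bform s₁ s₂ = -1)
    (hms₁ : bform m s₁ = 0) (hms₂ : bform m s₂ = 0) (hmp : bform m p = 0)
    (hns₁ : bform n s₁ = 0) (hns₂ : bform n s₂ = 0) (hnp : bform n p = 0)
    (hmn : bform m n ≠ 0)
    (W : Submodule ℝ R42)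
    (hW : W = LinearMap.ker (bform.flip (s₁ + p)) ⊓ LinearMap.ker (bform.flip (s₂ + p)) ⊓
          LinearMap.ker (bform.flip m) ⊓ LinearMap.ker (bform.flip n)) :
    Module.finrank ℝ W = 2 ∧
    (∃ u v : R42, u ∈ W ∧ v ∈ W ∧ 0 < bform u u ∧ bform v v < 0 ∧ bform u v = 0 ∧
      W = Submodule.span ℝ ({u, v} : Set R42)) ∧
    ∃ t ∈ W, t ≠ 0 ∧ bform t t = 0 := by
  obtain ⟨hs₁0, hs₁s₁⟩ := hs₁
  obtain ⟨hs₂0, hs₂s₂⟩ := hs₂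
  obtain ⟨hm0, hmm⟩ := hm
  obtain ⟨hn0, hnn⟩ := hn
  have hp0 : p ≠ 0 := fun h => by simp [h] at hp
  have hps₁ : bform p s₁ = 1 := (bform_comm p s₁).trans hs₁p
  have hps₂ : bform p s₂ = 1 := (bform_comm p s₂).trans hs₂p
  have hs₂s₁ : bform s₂ s₁ = -1 := (bform_comm s₂ s₁).trans hs₁s₂
  have hs₁m : bform s₁ m = 0 := (bform_comm s₁ m).trans hms₁
  have hs₂m : bform s₂ m = 0 := (bform_comm s₂ m).trans hms₂
  have hpm : bform p m = 0 := (bform_comm p m).trans hmp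
  have hs₁n : bform s₁ n = 0 := (bform_comm s₁ n).trans hns₁
  have hs₂n : bform s₂ n = 0 := (bform_comm s₂ n).trans hns₂
  have hpn : bform p n = 0 := (bform_comm p n).trans hnp
  have hnm : bform n m = bform m n := bform_comm n m
  -- membership criterion for W
  have hWmem : ∀ t, t ∈ W ↔
      bform t (s₁ + p) = 0 ∧ bform t (s₂ + p) = 0 ∧ bform t m = 0 ∧ bform t n = 0 := by
    intro t
    simp [hW, Submodule.mem_inf, LinearMap.mem_ker, LinearMap.flip_apply, and_assoc]
  -- `p ∈ W`
  have hpW : p ∈ W := by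
    rw [hWmem]
    refine ⟨?_, ?_, hpm, hpn⟩ <;> simp [map_add, hps₁, hps₂, hp]
  -- the rank of W
  set T : R42 →ₗ[ℝ] (Fin 4 → ℝ) :=
    LinearMap.pi ![bform.flip (s₁ + p), bform.flip (s₂ + p), bform.flip m, bform.flip n]
    with hT
  have hker : LinearMap.ker T = W := by
    ext t
    rw [hWmem]
    simp only [LinearMap.mem_ker, funext_iff, LinearMap.pi_apply, hT, Pi.zero_apply]
    rw [Fin.forall_fin_succ, Fin.forall_fin_succ, Fin.forall_fin_succ]
    simp [LinearMap.flip_apply, Fin.forall_fin_one]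
  have hsurj : Function.Surjective T := by
    intro y
    refine ⟨y 0 • (s₁ + p) + y 1 • (s₂ + p) + ((bform m n)⁻¹ * y 3) • m +
      ((bform m n)⁻¹ * y 2) • n, ?_⟩
    funext i
    fin_cases i <;>
      simp [hT, LinearMap.pi_apply, LinearMap.flip_apply, map_add, map_smul, hs₁s₁, hs₂s₂,
        hmm, hnn, hs₁s₂, hs₂s₁, hs₁p, hs₂p, hps₁, hps₂, hp, hms₁, hms₂, hmp, hns₁, hns₂,
        hnp, hs₁m, hs₂m, hpm, hs₁n, hs₂n, hpn, hnm]
    all_goals field_simp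
  have hrank : Module.finrank ℝ W = 2 := by
    have h1 := LinearMap.finrank_range_add_finrank_ker T
    rw [hker, LinearMap.range_eq_top.mpr hsurj] at h1
    simp only [finrank_top, Module.finrank_fin_fun] at h1
    omega
  -- a vector `u ∈ W` orthogonal to `p`
  have hKfin : Module.finrank ℝ (LinearMap.ker (bform.flip p)) = 5 := by
    have h1 := LinearMap.finrank_range_add_finrank_ker (bform.flip p)
    have hsur : Function.Surjective (bform.flip p) := by
      intro y
      refine ⟨(-y) • p, ?_⟩
      simp [LinearMap.flip_apply, map_smul, hp]
    rw [LinearMap.range_eq_top.mpr hsur] at h1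
    simp only [finrank_top, Module.finrank_self, Module.finrank_fin_fun] at h1
    omega
  have hWK : W ⊓ LinearMap.ker (bform.flip p) ≠ ⊥ := by
    have h2 := Submodule.finrank_sup_add_finrank_inf_eq W (LinearMap.ker (bform.flip p))
    have h3 : Module.finrank ℝ ↥(W ⊔ LinearMap.ker (bform.flip p)) ≤ 6 := by
      simpa [Module.finrank_fin_fun] using
        Submodule.finrank_le (W ⊔ LinearMap.ker (bform.flip p))
    rw [hrank, hKfin] at h2
    intro hbot
    rw [hbot] at h2
    simp [finrank_bot] at h2
    omega
  obtain ⟨u, huWK, hu0⟩ := Submodule.exists_mem_ne_zero_of_ne_bot hWK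
  obtain ⟨huW, huK⟩ := Submodule.mem_inf.mp huWK
  have hup : bform u p = 0 := huK
  have hpu : bform p u = 0 := (bform_comm p u).trans hup
  obtain ⟨hu1, hu2, hum, hun⟩ := (hWmem u).mp huW
  have hmu : bform m u = 0 := (bform_comm m u).trans hum
  have hnu : bform n u = 0 := (bform_comm n u).trans hun
  -- the auxiliary negative vector q
  obtain ⟨q, hq⟩ : ∃ q : R42, q = (bform m n)⁻¹ • m - n := ⟨_, rfl⟩
  have huq : bform u q = 0 := by simp [hq, map_sub, map_smul, hum, hun]
  have hqu : bform q u = 0 := (bform_comm q u).trans huq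
  have hpq : bform p q = 0 := by simp [hq, map_sub, map_smul, hpm, hpn]
  have hqp : bform q p = 0 := (bform_comm q p).trans hpq
  have hqq : bform q q = -2 := by
    simp only [hq, map_sub, map_smul, LinearMap.sub_apply, LinearMap.smul_apply, smul_eq_mul,
      hmm, hnn, hnm]
    field_simp
    norm_num
    ring
  -- positivity of bform u u
  have hupos : 0 < bform u u := by
    by_contra hle
    push_neg at hle
    set M : Matrix (Fin 2) (Fin 3) ℝ := ![![u 4, p 4, q 4], ![u 5, p 5, q 5]] with hM
    have hker2 : LinearMap.ker M.mulVecLin ≠ ⊥ := by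
      have h1 := LinearMap.finrank_range_add_finrank_ker M.mulVecLin
      have h2 : Module.finrank ℝ (LinearMap.range M.mulVecLin) ≤ 2 := by
        simpa [Module.finrank_fin_fun] using Submodule.finrank_le (LinearMap.range M.mulVecLin)
      simp only [Module.finrank_fin_fun] at h1
      intro hbot
      rw [hbot] at h1
      simp [finrank_bot] at h1
      omega
    obtain ⟨v, hvker, hv0⟩ := Submodule.exists_mem_ne_zero_of_ne_bot hker2
    have hv := congrFun (LinearMap.mem_ker.mp hvker)
    have h4 := hv 0
    have h5 := hv 1
    rw [Matrix.mulVecLin_apply] at h4 h5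
    simp [hM, Matrix.mulVecLin_apply, Matrix.mulVec, dotProduct,
      Fin.sum_univ_three] at h4 h5
    obtain ⟨x, hx⟩ : ∃ x : R42, x = v 0 • u + v 1 • p + v 2 • q := ⟨_, rfl⟩
    have hx4 : x 4 = 0 := by
      rw [hx]
      simp only [Pi.add_apply, Pi.smul_apply, smul_eq_mul]
      linarith
    have hx5 : x 5 = 0 := by
      rw [hx]
      simp only [Pi.add_apply, Pi.smul_apply, smul_eq_mul]
      linarith
    have hxx : bform x x = v 0 ^ 2 * bform u u - v 1 ^ 2 - 2 * v 2 ^ 2 := by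
      rw [hx]
      simp only [map_add, map_smul, LinearMap.add_apply, LinearMap.smul_apply, smul_eq_mul,
        hup, hpu, huq, hqu, hpq, hqp, hp, hqq]
      ring
    have hxx2 : bform x x = x 0 ^ 2 + x 1 ^ 2 + x 2 ^ 2 + x 3 ^ 2 := by
      rw [bform_apply, hx4, hx5]; ring
    have hle2 : x 0 ^ 2 + x 1 ^ 2 + x 2 ^ 2 + x 3 ^ 2 ≤ 0 := by
      rw [← hxx2, hxx]
      nlinarith only [hle, sq_nonneg (v 0), sq_nonneg (v 1), sq_nonneg (v 2)]
    have hz0 : x 0 = 0 := aux_sq (by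
      linarith only [hle2, sq_nonneg (x 1), sq_nonneg (x 2), sq_nonneg (x 3)])
    have hz1 : x 1 = 0 := aux_sq (by
      linarith only [hle2, sq_nonneg (x 0), sq_nonneg (x 2), sq_nonneg (x 3)])
    have hz2 : x 2 = 0 := aux_sq (by
      linarith only [hle2, sq_nonneg (x 0), sq_nonneg (x 1), sq_nonneg (x 3)])
    have hz3 : x 3 = 0 := aux_sq (by
      linarith only [hle2, sq_nonneg (x 0), sq_nonneg (x 1), sq_nonneg (x 2)])
    have hxzero : x = 0 := by
      funext i; fin_cases i <;> simp [hz0, hz1, hz2, hz3, hx4, hx5]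
    have hb : v 1 = 0 := by
      have h := congrArg (fun z => bform z p) hxzero
      rw [hx] at h
      simp only [map_add, map_smul, LinearMap.add_apply, LinearMap.smul_apply, smul_eq_mul,
        hup, hp, hqp, map_zero, LinearMap.zero_apply] at h
      linarith only [h]
    have hg : v 2 = 0 := by
      have h := congrArg (fun z => bform z q) hxzero
      rw [hx] at h
      simp only [map_add, map_smul, LinearMap.add_apply, LinearMap.smul_apply, smul_eq_mul,
        huq, hpq, hqq, map_zero, LinearMap.zero_apply] at h
      linarith only [h]
    have ha : v 0 = 0 := by
      have h : v 0 • u = 0 := by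
        have := hxzero
        rw [hx, hb, hg] at this
        simpa using this
      rcases smul_eq_zero.mp h with h' | h'
      · exact h'
      · exact absurd h' hu0
    exact hv0 (funext fun i => by fin_cases i <;> simp [ha, hb, hg])
  -- W = span {u, p}
  have hupind : LinearIndependent ℝ ![u, p] := by
    rw [LinearIndependent.pair_iff]
    intro s t hst
    have h1 := congrArg (fun z => bform z u) hst
    simp only [map_add, map_smul, LinearMap.add_apply, LinearMap.smul_apply, smul_eq_mul,
      hpu, map_zero, LinearMap.zero_apply] at h1
    have hs : s = 0 := by
      rcases mul_eq_zero.mp (by linarith only [h1] : s * bform u u = 0) with h | h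
      · exact h
      · exact absurd h (ne_of_gt hupos)
    have h2 := congrArg (fun z => bform z p) hst
    simp only [map_add, map_smul, LinearMap.add_apply, LinearMap.smul_apply, smul_eq_mul,
      hup, hp, map_zero, LinearMap.zero_apply] at h2
    exact ⟨hs, by rw [hs] at h2; linarith only [h2]⟩
  have hspanfr : Module.finrank ℝ (Submodule.span ℝ ({u, p} : Set R42)) = 2 := by
    have h := finrank_span_eq_card hupind
    have hrange : Set.range ![u, p] = ({u, p} : Set R42) := by
      simp only [Matrix.range_cons, Matrix.range_empty, Set.union_empty, Set.union_singleton]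
      rw [Set.pair_comm]
    rw [hrange] at h
    exact h.trans (by simp)
  have hle : Submodule.span ℝ ({u, p} : Set R42) ≤ W := by
    rw [Submodule.span_le]
    rintro z (rfl | rfl)
    · exact huW
    · exact hpW
  have hspan : W = Submodule.span ℝ ({u, p} : Set R42) :=
    (Submodule.eq_of_le_of_finrank_le hle (by rw [hrank, hspanfr])).symm
  refine ⟨hrank, ⟨u, p, huW, hpW, hupos, by rw [hp]; norm_num, hup, hspan⟩, ?_⟩
  refine ⟨u + Real.sqrt (bform u u) • p, W.add_mem huW (W.smul_mem _ hpW), ?_, ?_⟩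
  · intro h
    have h1 := congrArg (fun z => bform z p) h
    simp only [map_add, map_smul, LinearMap.add_apply, LinearMap.smul_apply, smul_eq_mul,
      hup, hp, map_zero, LinearMap.zero_apply] at h1
    have h2 := Real.sqrt_pos.mpr hupos
    nlinarith only [h1, h2]
  · have hs := Real.mul_self_sqrt hupos.le
    simp only [map_add, map_smul, LinearMap.add_apply, LinearMap.smul_apply, smul_eq_mul,
      hup, hpu, hp]
    nlinarith only [hs]
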